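/- In the symmetric group S₈, let H = ⟨(1 2 3 4), (1 2), (1 5)(2 6)(3 7)(4 8)⟩ ≅ S₄ ≀ S₂. Then for every choice of x, y, z ∈ S₈, the intersection H ∩ H^x ∩ H^y ∩ H^z is nontrivial. -/

import Mathlib

set_option maxRecDepth 10000
set_option maxHeartbeats 2000000

def conjS {G : Type*} [Group G] (g : G) (H : Subgroup G) : Subgroup G :=
  H.map (MulAut.conj g⁻¹).toMonoidHom

namespace Stmt9Aux

open Equiv Equiv.Perm Finset
abbrev G := Equiv.Perm (Fin 8)
def A : Finset (Fin 8) := {0,1,2,3}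
def stabP (g : G) (B : Finset (Fin 8)) : Prop := B.image g = B ∨ B.image g = Bᶜ
instance (g : G) (B : Finset (Fin 8)) : Decidable (stabP g B) :=
  inferInstanceAs (Decidable (_ ∨ _))

lemma image_mul (g h : G) (B : Finset (Fin 8)) :
    B.image ⇑(g * h) = (B.image ⇑h).image ⇑g := by
  rw [Finset.image_image]; rfl

lemma image_inv_eq {g : G} {S T : Finset (Fin 8)} (h : S.image ⇑g = T) :
    T.image ⇑g⁻¹ = S := by
  rw [← h, Finset.image_image]
  have : (⇑g⁻¹ ∘ ⇑g) = id := funext fun x => g.symm_apply_apply x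
  rw [this, Finset.image_id]

lemma image_compl (g : G) (B : Finset (Fin 8)) : Bᶜ.image ⇑g = (B.image ⇑g)ᶜ := by
  ext x
  simp only [Finset.mem_image, Finset.mem_compl]
  constructor
  · rintro ⟨y, hy, rfl⟩ ⟨z, hz, hzy⟩
    exact hy (by rwa [← g.injective hzy])
  · intro h
    exact ⟨g⁻¹ x, fun hx => h ⟨g⁻¹ x, hx, g.apply_symm_apply x⟩, g.apply_symm_apply x⟩

def K : Subgroup G where
  carrier := {g | stabP g A}
  one_mem' := by show stabP 1 A; decide
  mul_mem' := by
    rintro a b ha hb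
    show stabP (a * b) A
    have h := image_mul a b A
    rcases hb with hb | hb <;> rw [hb] at h
    · rcases ha with ha | ha
      · exact Or.inl (h.trans ha)
      · exact Or.inr (h.trans ha)
    · rw [image_compl] at h
      rcases ha with ha | ha
      · exact Or.inr (by rw [h, ha])
      · exact Or.inl (by rw [h, ha, compl_compl])
  inv_mem' := by
    rintro a (ha | ha)
    · exact Or.inl (image_inv_eq ha)
    · refine Or.inr ?_
      have h1 : Aᶜ.image ⇑a⁻¹ = A := image_inv_eq ha
      rw [image_compl] at h1
      rw [← compl_compl (A.image ⇑a⁻¹), h1]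

lemma mem_K {g : G} : g ∈ K ↔ stabP g A := Iff.rfl
def c : G := Equiv.swap 0 1 * Equiv.swap 1 2 * Equiv.swap 2 3
def s : G := Equiv.swap 0 1
def t : G := Equiv.swap 0 4 * Equiv.swap 1 5 * Equiv.swap 2 6 * Equiv.swap 3 7
def L : Subgroup G := Subgroup.closure {c, s, t}

lemma hcL : c ∈ L := Subgroup.subset_closure (by simp)
lemma hsL : s ∈ L := Subgroup.subset_closure (by simp)
lemma htL : t ∈ L := Subgroup.subset_closure (by simp)

lemma swap_mem_L : ∀ a b : Fin 8, ((a : ℕ) < 4 ↔ (b : ℕ) < 4) → Equiv.swap a b ∈ L := by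
  have h01 : Equiv.swap (0 : Fin 8) 1 ∈ L := hsL
  have h12 : Equiv.swap (1 : Fin 8) 2 ∈ L := by
    rw [show Equiv.swap (1 : Fin 8) 2 = c * s * c⁻¹ from by decide]
    exact mul_mem (mul_mem hcL hsL) (inv_mem hcL)
  have h23 : Equiv.swap (2 : Fin 8) 3 ∈ L := by
    rw [show Equiv.swap (2 : Fin 8) 3 = c * (c * s * c⁻¹) * c⁻¹ from by decide]
    exact mul_mem (mul_mem hcL (mul_mem (mul_mem hcL hsL) (inv_mem hcL))) (inv_mem hcL)
  have h03 : Equiv.swap (0 : Fin 8) 3 ∈ L := by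
    rw [show Equiv.swap (0 : Fin 8) 3 = c * (c * (c * s * c⁻¹) * c⁻¹) * c⁻¹ from by decide]
    exact mul_mem (mul_mem hcL (mul_mem (mul_mem hcL (mul_mem (mul_mem hcL hsL) (inv_mem hcL))) (inv_mem hcL))) (inv_mem hcL)
  have h02 : Equiv.swap (0 : Fin 8) 2 ∈ L := by
    rw [show Equiv.swap (0 : Fin 8) 2 = Equiv.swap 1 2 * Equiv.swap 0 1 * (Equiv.swap 1 2)⁻¹ from by decide]
    exact mul_mem (mul_mem h12 h01) (inv_mem h12)
  have h13 : Equiv.swap (1 : Fin 8) 3 ∈ L := by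
    rw [show Equiv.swap (1 : Fin 8) 3 = Equiv.swap 2 3 * Equiv.swap 1 2 * (Equiv.swap 2 3)⁻¹ from by decide]
    exact mul_mem (mul_mem h23 h12) (inv_mem h23)
  have h45 : Equiv.swap (4 : Fin 8) 5 ∈ L := by
    rw [show Equiv.swap (4 : Fin 8) 5 = t * Equiv.swap 0 1 * t⁻¹ from by decide]
    exact mul_mem (mul_mem htL h01) (inv_mem htL)
  have h56 : Equiv.swap (5 : Fin 8) 6 ∈ L := by
    rw [show Equiv.swap (5 : Fin 8) 6 = t * Equiv.swap 1 2 * t⁻¹ from by decide]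
    exact mul_mem (mul_mem htL h12) (inv_mem htL)
  have h67 : Equiv.swap (6 : Fin 8) 7 ∈ L := by
    rw [show Equiv.swap (6 : Fin 8) 7 = t * Equiv.swap 2 3 * t⁻¹ from by decide]
    exact mul_mem (mul_mem htL h23) (inv_mem htL)
  have h47 : Equiv.swap (4 : Fin 8) 7 ∈ L := by
    rw [show Equiv.swap (4 : Fin 8) 7 = t * Equiv.swap 0 3 * t⁻¹ from by decide]
    exact mul_mem (mul_mem htL h03) (inv_mem htL)
  have h46 : Equiv.swap (4 : Fin 8) 6 ∈ L := by
    rw [show Equiv.swap (4 : Fin 8) 6 = t * Equiv.swap 0 2 * t⁻¹ from by decide]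
    exact mul_mem (mul_mem htL h02) (inv_mem htL)
  have h57 : Equiv.swap (5 : Fin 8) 7 ∈ L := by
    rw [show Equiv.swap (5 : Fin 8) 7 = t * Equiv.swap 1 3 * t⁻¹ from by decide]
    exact mul_mem (mul_mem htL h13) (inv_mem htL)
  intro a b h
  fin_cases a <;> fin_cases b <;>
    first
    | exact absurd h (by decide)
    | (rw [Equiv.swap_self]; exact L.one_mem)
    | exact h01
    | exact h12
    | exact h23
    | exact h03
    | exact h02
    | exact h13
    | exact h45
    | exact h56
    | exact h67
    | exact h47
    | exact h46
    | exact h57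
    | (rw [Equiv.swap_comm]; first | exact h01 | exact h12 | exact h23 | exact h03 | exact h02 | exact h13 | exact h45 | exact h56 | exact h67 | exact h47 | exact h46 | exact h57)

lemma supp_mem (B : Finset (Fin 8)) (hB : ∀ a b : Fin 8, a ∈ B → b ∈ B → Equiv.swap a b ∈ L) :
    ∀ n (g : G), g.support.card ≤ n → g.support ⊆ B → g ∈ L := by
  intro n
  induction n with
  | zero =>
    intro g hc _
    have : g.support = ∅ := Finset.card_eq_zero.1 (Nat.le_zero.1 hc)
    rw [Equiv.Perm.support_eq_empty_iff] at this
    rw [this]; exact one_mem L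
  | succ n ih =>
    intro g hc hsub
    by_cases hg : g = 1
    · rw [hg]; exact one_mem L
    · obtain ⟨a, ha⟩ := Finset.nonempty_iff_ne_empty.2 (fun h => hg (Equiv.Perm.support_eq_empty_iff.1 h))
      have hga : g a ≠ a := Equiv.Perm.mem_support.1 ha
      have hb : g a ∈ g.support := Equiv.Perm.apply_mem_support.2 ha
      have key := Equiv.Perm.card_support_swap_mul hga
      have hsub2 : (Equiv.swap a (g a) * g).support ⊆ B := by
        intro x hx
        have hx2 := Equiv.Perm.support_mul_le (Equiv.swap a (g a)) g hx
        rcases Finset.mem_union.1 hx2 with hx3 | hx3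
        · have hne : a ≠ g a := fun h => hga h.symm
          rw [Equiv.Perm.support_swap hne] at hx3
          rcases Finset.mem_insert.1 hx3 with rfl | hx4
          · exact hsub ha
          · rw [Finset.mem_singleton.1 hx4]; exact hsub hb
        · exact hsub hx3
      have hmem : Equiv.swap a (g a) * g ∈ L :=
        ih _ (by omega) hsub2
      have : g = Equiv.swap a (g a) * (Equiv.swap a (g a) * g) := by
        rw [← mul_assoc, Equiv.swap_mul_self, one_mul]
      rw [this]
      exact mul_mem (hB a (g a) (hsub ha) (hsub hb)) hmem

lemma supp_mem_A (g : G) (h : g.support ⊆ A) : g ∈ L := by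
  refine supp_mem A ?_ g.support.card g le_rfl h
  intro a b ha hb
  refine swap_mem_L a b ?_
  have : ∀ x : Fin 8, x ∈ A → (x : ℕ) < 4 := by decide
  exact iff_of_true (this a ha) (this b hb)

lemma supp_mem_Ac (g : G) (h : g.support ⊆ Aᶜ) : g ∈ L := by
  refine supp_mem Aᶜ ?_ g.support.card g le_rfl h
  intro a b ha hb
  refine swap_mem_L a b ?_
  have : ∀ x : Fin 8, x ∈ Aᶜ → ¬ ((x : ℕ) < 4) := by decide
  exact iff_of_false (this a ha) (this b hb)

lemma case1 (g : G) (hImg : A.image ⇑g = A) : g ∈ L := by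
  have hmemA : ∀ x : Fin 8, x ∈ A ↔ g x ∈ A := by
    intro x
    constructor
    · intro hx; rw [← hImg]; exact Finset.mem_image_of_mem _ hx
    · intro hx
      rw [← hImg] at hx
      obtain ⟨y, hy, hyx⟩ := Finset.mem_image.1 hx
      rwa [← g.injective hyx]
  set g₁ : G := Equiv.Perm.ofSubtype (g.subtypePerm (fun x => (hmemA x).symm)) with hg₁
  have hg₁A : ∀ x : Fin 8, x ∈ A → g₁ x = g x := by
    intro x hx
    rw [hg₁, Equiv.Perm.ofSubtype_apply_of_mem (g.subtypePerm (fun x => (hmemA x).symm)) hx]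
    rfl
  have hg₁nA : ∀ x : Fin 8, x ∉ A → g₁ x = x := fun x hx =>
    Equiv.Perm.ofSubtype_apply_of_not_mem (g.subtypePerm (fun x => (hmemA x).symm)) hx
  have hsupp1 : g₁.support ⊆ A := by
    intro x hx
    by_contra hxA
    exact Equiv.Perm.mem_support.1 hx (hg₁nA x hxA)
  have hsupp2 : (g₁⁻¹ * g).support ⊆ Aᶜ := by
    intro x hx
    rw [Finset.mem_compl]
    intro hxA
    apply Equiv.Perm.mem_support.1 hx
    show g₁⁻¹ (g x) = x
    rw [← hg₁A x hxA]
    exact g₁.symm_apply_apply x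
  have : g = g₁ * (g₁⁻¹ * g) := by rw [← mul_assoc, mul_inv_cancel, one_mul]
  rw [this]
  exact mul_mem (supp_mem_A _ hsupp1) (supp_mem_Ac _ hsupp2)

lemma K_le_L : ∀ g : G, stabP g A → g ∈ L := by
  rintro g (h | h)
  · exact case1 g h
  · have himg : A.image ⇑(t * g) = A := by
      have : A.image ⇑(t * g) = (A.image ⇑g).image ⇑t := image_mul t g A
      rw [this, h]
      decide
    have := case1 (t * g) himg
    have hg : g = t⁻¹ * (t * g) := by rw [← mul_assoc, inv_mul_cancel, one_mul]
    rw [hg]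
    exact mul_mem (inv_mem htL) this

lemma L_eq_K : L = K := by
  apply le_antisymm
  · rw [L, Subgroup.closure_le]
    rintro g hg
    simp only [Set.mem_insert_iff, Set.mem_singleton_iff] at hg
    rcases hg with rfl | rfl | rfl
    · show stabP c A; decide
    · show stabP s A; decide
    · show stabP t A; decide
  · intro g hg
    exact K_le_L g hg
def subsList : List (Finset (Fin 8)) := [
{0,1,2,3}, {0,1,2,4}, {0,1,2,5}, {0,1,2,6}, {0,1,2,7}, {0,1,3,4}, {0,1,3,5}, {0,1,3,6}, {0,1,3,7}, {0,1,4,5}, {0,1,4,6}, {0,1,4,7}, {0,1,5,6}, {0,1,5,7}, {0,1,6,7}, {0,2,3,4}, {0,2,3,5}, {0,2,3,6}, {0,2,3,7}, {0,2,4,5}, {0,2,4,6}, {0,2,4,7}, {0,2,5,6}, {0,2,5,7}, {0,2,6,7}, {0,3,4,5}, {0,3,4,6}, {0,3,4,7}, {0,3,5,6}, {0,3,5,7}, {0,3,6,7}, {0,4,5,6}, {0,4,5,7}, {0,4,6,7}, {0,5,6,7}, {1,2,3,4}, {1,2,3,5}, {1,2,3,6}, {1,2,3,7}, {1,2,4,5},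 {1,2,4,6}, {1,2,4,7}, {1,2,5,6}, {1,2,5,7}, {1,2,6,7}, {1,3,4,5}, {1,3,4,6}, {1,3,4,7}, {1,3,5,6}, {1,3,5,7}, {1,3,6,7}, {1,4,5,6}, {1,4,5,7}, {1,4,6,7}, {1,5,6,7}, {2,3,4,5}, {2,3,4,6}, {2,3,4,7}, {2,3,5,6}, {2,3,5,7}, {2,3,6,7}, {2,4,5,6}, {2,4,5,7}, {2,4,6,7}, {2,5,6,7}, {3,4,5,6}, {3,4,5,7}, {3,4,6,7}, {3,5,6,7}, {4,5,6,7}]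

def cands : List (Equiv.Perm (Fin 8) × Nat) := [
(Equiv.swap 4 7, 825938082690599426253),
(Equiv.swap 5 7, 982960801677701194923),
(Equiv.swap 4 5, 709090689175776019353),
(Equiv.swap 6 7, 1061904935493883773543),
(Equiv.swap 5 6, 943542831669460638003),
(Equiv.swap 4 6, 786952887056530220373),
(Equiv.swap 0 1, 1180555591920392372223),
(Equiv.swap 0 2, 1143734126182672597023),
(Equiv.swap 1 2, 1143698167754330734623),
(Equiv.swap 0 3, 624917267130847035873),
(Equiv.swap 1 3, 624885672659994018273),
(Equiv.swap 2 3, 592599402115714514433),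
(Equiv.swap 0 3 * Equiv.swap 1 2 * Equiv.swap 4 7 * Equiv.swap 5 6, 592135080007148529153),
(Equiv.swap 0 3 * Equiv.swap 1 2 * Equiv.swap 4 6 * Equiv.swap 5 7, 591918699417535273473),
(Equiv.swap 0 3 * Equiv.swap 1 2 * Equiv.swap 4 5 * Equiv.swap 6 7, 591377747943502134273),
(Equiv.swap 0 7 * Equiv.swap 1 6 * Equiv.swap 2 5 * Equiv.swap 3 4, 895861181669371429443),
(Equiv.swap 0 6 * Equiv.swap 1 7 * Equiv.swap 2 5 * Equiv.swap 3 4, 895858721926766936643),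
(Equiv.swap 0 7 * Equiv.swap 1 5 * Equiv.swap 2 6 * Equiv.swap 3 4, 890714095060876076163),
(Equiv.swap 0 5 * Equiv.swap 1 7 * Equiv.swap 2 6 * Equiv.swap 3 4, 890706612135471096963),
(Equiv.swap 0 6 * Equiv.swap 1 5 * Equiv.swap 2 7 * Equiv.swap 3 4, 888192082432993335555),
(Equiv.swap 0 5 * Equiv.swap 1 6 * Equiv.swap 2 7 * Equiv.swap 3 4, 888187059250192849155),
(Equiv.swap 0 7 * Equiv.swap 1 6 * Equiv.swap 2 4 * Equiv.swap 3 5, 757510393309050323493),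
(Equiv.swap 0 6 * Equiv.swap 1 7 * Equiv.swap 2 4 * Equiv.swap 3 5, 757508349181444768293),
(Equiv.swap 0 7 * Equiv.swap 1 4 * Equiv.swap 2 6 * Equiv.swap 3 5, 742932980187076794501),
(Equiv.swap 0 4 * Equiv.swap 1 7 * Equiv.swap 2 6 * Equiv.swap 3 5, 742916697844146772101),
(Equiv.swap 0 6 * Equiv.swap 1 4 * Equiv.swap 2 7 * Equiv.swap 3 5, 740843306525949207813),
(Equiv.swap 0 4 * Equiv.swap 1 6 * Equiv.swap 2 7 * Equiv.swap 3 5, 740829068310624740613),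
(Equiv.swap 0 7 * Equiv.swap 1 5 * Equiv.swap 2 4 * Equiv.swap 3 6, 683187496905395479593),
(Equiv.swap 0 5 * Equiv.swap 1 7 * Equiv.swap 2 4 * Equiv.swap 3 6, 683181468632486781993),
(Equiv.swap 0 7 * Equiv.swap 1 4 * Equiv.swap 2 5 * Equiv.swap 3 6, 673757170391917303881),
(Equiv.swap 0 4 * Equiv.swap 1 7 * Equiv.swap 2 5 * Equiv.swap 3 6, 673741927086484625481),
(Equiv.swap 0 5 * Equiv.swap 1 4 * Equiv.swap 2 7 * Equiv.swap 3 6, 667596234356381762313),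
(Equiv.swap 0 4 * Equiv.swap 1 5 * Equiv.swap 2 7 * Equiv.swap 3 6, 667587019323857781513),
(Equiv.swap 0 6 * Equiv.swap 1 5 * Equiv.swap 2 4 * Equiv.swap 3 7, 646078046946806798385),
(Equiv.swap 0 5 * Equiv.swap 1 6 * Equiv.swap 2 4 * Equiv.swap 3 7, 646074062801503655985),
(Equiv.swap 0 6 * Equiv.swap 1 4 * Equiv.swap 2 5 * Equiv.swap 3 7, 637079643785084838993),
(Equiv.swap 0 4 * Equiv.swap 1 6 * Equiv.swap 2 5 * Equiv.swap 3 7, 637066860222256653393),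
(Equiv.swap 0 5 * Equiv.swap 1 4 * Equiv.swap 2 6 * Equiv.swap 3 7, 633008381410676884113),
(Equiv.swap 0 4 * Equiv.swap 1 5 * Equiv.swap 2 6 * Equiv.swap 3 7, 632999581993151840913),
(Equiv.swap 0 2 * Equiv.swap 1 3 * Equiv.swap 4 7 * Equiv.swap 5 6, 592133729258401981953),
(Equiv.swap 0 2 * Equiv.swap 1 3 * Equiv.swap 4 6 * Equiv.swap 5 7, 591917764283787663873),
(Equiv.swap 0 1 * Equiv.swap 2 3 * Equiv.swap 4 5 * Equiv.swap 6 7, 591485832685190922753),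
(Equiv.swap 0 2 * Equiv.swap 1 3 * Equiv.swap 4 5 * Equiv.swap 6 7, 591377851847251868673),
(Equiv.swap 0 1 * Equiv.swap 2 3 * Equiv.swap 4 6 * Equiv.swap 5 7, 590945936742336177153),
(Equiv.swap 0 1 * Equiv.swap 2 3 * Equiv.swap 4 7 * Equiv.swap 5 6, 590729978365194278913)]
def subs (j : Nat) : Finset (Fin 8) := subsList.getD j ∅

lemma subs_exists : ∀ B : Finset (Fin 8), B.card = 4 → ∃ j : Fin 70, subs j.val = B := by decide

def coverFn (j1 j2 : Nat) : Nat :=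
  cands.foldr (fun c acc => if c.2.testBit j1 && c.2.testBit j2 then acc ||| c.2 else acc) 0

lemma cover_full : ∀ j1 j2 : Fin 70, coverFn j1.val j2.val = 2 ^ 70 - 1 := by decide

lemma cands_stab : ∀ c : Equiv.Perm (Fin 8) × Nat, c ∈ cands → c.1 ≠ 1 ∧ stabP c.1 A ∧
    ∀ j : Fin 70, c.2.testBit j.val = true → stabP c.1 (subs j.val) := by decide

lemma foldr_spec (j1 j2 j3 : Nat) : ∀ (l : List (G × Nat)),
    (l.foldr (fun (c : G × Nat) (acc : Nat) => if c.2.testBit j1 && c.2.testBit j2 then acc ||| c.2 else acc)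
      0).testBit j3 = true →
    ∃ c ∈ l, c.2.testBit j1 = true ∧ c.2.testBit j2 = true ∧ c.2.testBit j3 = true := by
  intro l
  induction l with
  | nil => simp [Nat.zero_testBit]
  | cons c l ih =>
    simp only [List.foldr_cons]
    by_cases hc : (c.2.testBit j1 && c.2.testBit j2) = true
    · rw [if_pos hc, Nat.testBit_or]
      intro h
      obtain ⟨h1, h2⟩ := Bool.and_eq_true_iff.1 hc
      rcases Bool.or_eq_true _ _ ▸ h with h | h
      · obtain ⟨c', hmem, h'⟩ := ih h
        exact ⟨c', List.mem_cons_of_mem _ hmem, h'⟩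
      · exact ⟨c, List.mem_cons_self, h1, h2, h⟩
    · rw [if_neg hc]
      intro h
      obtain ⟨c', hmem, h'⟩ := ih h
      exact ⟨c', List.mem_cons_of_mem _ hmem, h'⟩

lemma core : ∀ B1 B2 B3 : Finset (Fin 8), B1.card = 4 → B2.card = 4 → B3.card = 4 →
    ∃ g : G, g ≠ 1 ∧ stabP g A ∧ stabP g B1 ∧ stabP g B2 ∧ stabP g B3 := by
  intro B1 B2 B3 h1 h2 h3
  obtain ⟨j1, rfl⟩ := subs_exists B1 h1
  obtain ⟨j2, rfl⟩ := subs_exists B2 h2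
  obtain ⟨j3, rfl⟩ := subs_exists B3 h3
  have hbit : (coverFn j1.val j2.val).testBit j3.val = true := by
    rw [cover_full j1 j2, Nat.testBit_two_pow_sub_one]
    exact decide_eq_true j3.isLt
  obtain ⟨cd, hmem, b1, b2, b3⟩ := foldr_spec j1.val j2.val j3.val cands hbit
  obtain ⟨hne, hA, hj⟩ := cands_stab cd hmem
  exact ⟨cd.1, hne, hA, hj j1 b1, hj j2 b2, hj j3 b3⟩


lemma mem_conjS {w g : Equiv.Perm (Fin 8)} {H : Subgroup (Equiv.Perm (Fin 8))} :
    g ∈ conjS w H ↔ w * g * w⁻¹ ∈ H := by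
  constructor
  · rintro ⟨h, hh, rfl⟩
    have : w * (MulAut.conj w⁻¹).toMonoidHom h * w⁻¹ = h := by
      simp [MulAut.conj_apply]; group
    rwa [this]
  · intro hg
    refine ⟨w * g * w⁻¹, hg, ?_⟩
    simp [MulAut.conj_apply]; group

lemma image_cancel (x : G) (S T : Finset (Fin 8)) :
    S.image ⇑x = T ↔ S = T.image ⇑x⁻¹ := by
  constructor
  · intro h; exact (image_inv_eq h).symm
  · intro h
    have := image_inv_eq (g := x⁻¹) h.symm
    rwa [inv_inv] at this

lemma conj_stab (x g : G) : stabP (x * g * x⁻¹) A ↔ stabP g (A.image ⇑x⁻¹) := by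
  have himg : A.image ⇑(x * g * x⁻¹) = ((A.image ⇑x⁻¹).image ⇑g).image ⇑x := by
    rw [image_mul, image_mul]
  unfold stabP
  rw [himg, image_cancel x, image_cancel x, image_compl]

end Stmt9Aux

/-- In `S₈`, with `H = ⟨(1 2 3 4), (1 2), (1 5)(2 6)(3 7)(4 8)⟩ ≅ S₄ ≀ S₂`
(letters shifted by one), for every `x, y, z` the intersection
`H ∩ H^x ∩ H^y ∩ H^z` is nontrivial. -/
theorem stmt9 (H : Subgroup (Equiv.Perm (Fin 8)))
    (hH : H = Subgroup.closure
      { Equiv.swap 0 1 * Equiv.swap 1 2 * Equiv.swap 2 3,   -- (1 2 3 4)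
        Equiv.swap 0 1,                                     -- (1 2)
        Equiv.swap 0 4 * Equiv.swap 1 5 * Equiv.swap 2 6 * Equiv.swap 3 7 }) :
    ∀ x y z : Equiv.Perm (Fin 8),
      H ⊓ conjS x H ⊓ conjS y H ⊓ conjS z H ≠ ⊥ := by
  intro x y z hbot
  have hHK : H = Stmt9Aux.K := by rw [hH]; exact Stmt9Aux.L_eq_K
  have c4 : ∀ w : Equiv.Perm (Fin 8), (Stmt9Aux.A.image ⇑w).card = 4 := fun w => by
    rw [Finset.card_image_of_injective _ w.injective]; decide
  obtain ⟨g, hne, hA, h1, h2, h3⟩ := Stmt9Aux.core (Stmt9Aux.A.image ⇑x⁻¹)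
    (Stmt9Aux.A.image ⇑y⁻¹) (Stmt9Aux.A.image ⇑z⁻¹) (c4 _) (c4 _) (c4 _)
  have hgH : g ∈ H := by rw [hHK]; exact hA
  have hgx : g ∈ conjS x H := by
    rw [Stmt9Aux.mem_conjS, hHK]; exact (Stmt9Aux.conj_stab x g).2 h1
  have hgy : g ∈ conjS y H := by
    rw [Stmt9Aux.mem_conjS, hHK]; exact (Stmt9Aux.conj_stab y g).2 h2
  have hgz : g ∈ conjS z H := by
    rw [Stmt9Aux.mem_conjS, hHK]; exact (Stmt9Aux.conj_stab z g).2 h3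
  have hg : g ∈ (⊥ : Subgroup (Equiv.Perm (Fin 8))) := by
    rw [← hbot]
    exact Subgroup.mem_inf.2 ⟨Subgroup.mem_inf.2 ⟨Subgroup.mem_inf.2 ⟨hgH, hgx⟩, hgy⟩, hgz⟩
  exact hne (Subgroup.mem_bot.1 hg)
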